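/- Fix an integer N > 0 and let x : ℝ → ℝ be the L² function whose Fourier transform is X(iω) = (1 + iω)^{−N−1}. Then x(t) = 0 for all t ≤ 0, x is not identically zero, and ∫_{-∞}^{∞} |ω|^{2N} |X(iω)|² dω < ∞. -/

import Mathlib

open MeasureTheory Real

theorem polynomial_decay_counterexample (N : ℕ) (hN : 0 < N) (x : ℝ → ℝ) (X : ℝ → ℂ)
    (hx : ∀ t : ℝ, x t = if 0 ≤ t then t ^ N * Real.exp (-t) / (N.factorial : ℝ) else 0)
    (hX : ∀ ω : ℝ, X ω = ((1 : ℂ) + Complex.I * ω) ^ (-(N : ℤ) - 1)) :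
    (∀ t ≤ (0 : ℝ), x t = 0) ∧ (¬ ∀ t : ℝ, x t = 0) ∧
      Integrable (fun ω : ℝ => |ω| ^ (2 * N) * ‖X ω‖ ^ 2) := by
  have hne : ∀ ω : ℝ, ((1 : ℂ) + Complex.I * ω) ≠ 0 := by
    intro ω h
    have h1 : ((1 : ℂ) + Complex.I * ω).re = 1 := by simp
    rw [h] at h1; simp at h1
  have habs : ∀ ω : ℝ, ‖X ω‖ ^ 2 = (1 + ω ^ 2) ^ (-(N : ℤ) - 1) := by
    intro ω
    rw [hX ω, norm_zpow]
    have : ‖(1 : ℂ) + Complex.I * ω‖ = Real.sqrt (1 + ω ^ 2) := by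
      rw [Complex.norm_def, Complex.normSq_apply]
      simp [add_comm]
      ring_nf
    rw [this, ← zpow_natCast (Real.sqrt (1 + ω ^ 2) ^ (-(N:ℤ) - 1)) 2, ← zpow_mul,
      mul_comm, zpow_mul, zpow_natCast, Real.sq_sqrt (by positivity)]
  refine ⟨?_, ?_, ?_⟩
  · intro t ht
    rw [hx t]
    rcases lt_or_eq_of_le ht with h | h
    · rw [if_neg (not_le.mpr h)]
    · subst h; simp [zero_pow hN.ne']
  · intro h
    have := h 1
    rw [hx 1] at this
    simp at this
    exact absurd this (by positivity)
  · have hbound : ∀ ω : ℝ, |ω| ^ (2 * N) * ‖X ω‖ ^ 2 ≤ (1 + ω ^ 2)⁻¹ := by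
      intro ω
      rw [habs ω]
      have h1 : (0:ℝ) < 1 + ω ^ 2 := by positivity
      have h2 : |ω| ^ (2 * N) ≤ (1 + ω ^ 2) ^ N := by
        rw [pow_mul, sq_abs]
        exact pow_le_pow_left₀ (by positivity) (by nlinarith) N
      calc |ω| ^ (2 * N) * (1 + ω ^ 2) ^ (-(N : ℤ) - 1)
          ≤ (1 + ω ^ 2) ^ N * (1 + ω ^ 2) ^ (-(N : ℤ) - 1) := by
            apply mul_le_mul_of_nonneg_right h2 (zpow_nonneg h1.le _)
        _ = (1 + ω ^ 2)⁻¹ := by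
            rw [← zpow_natCast (1 + ω ^ 2) N, ← zpow_add₀ h1.ne']
            have he : (N:ℤ) + (-(N:ℤ) - 1) = -1 := by ring
            rw [he, zpow_neg_one]
    have hcont : Continuous fun ω : ℝ => |ω| ^ (2 * N) * ‖X ω‖ ^ 2 := by
      have : (fun ω : ℝ => |ω| ^ (2 * N) * ‖X ω‖ ^ 2)
          = fun ω : ℝ => |ω| ^ (2 * N) * ((1 + ω ^ 2) ^ (-(N : ℤ) - 1)) := by
        funext ω; rw [habs ω]
      rw [this]
      apply Continuous.mul (by continuity)
      apply Continuous.zpow₀ (by continuity)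
      intro ω; left; positivity
    refine (integrable_inv_one_add_sq.mono hcont.aestronglyMeasurable ?_)
    filter_upwards with ω
    rw [Real.norm_eq_abs, Real.norm_eq_abs]
    have h1 : (0:ℝ) < 1 + ω ^ 2 := by positivity
    rw [abs_of_nonneg (by positivity), abs_of_nonneg (by positivity : (0:ℝ) ≤ (1+ω^2)⁻¹)]
    have := hbound ω
    simpa [sq] using this
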